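/- arXiv:1001.0366 — 6 statements merged into one kernel-verified Lean document; each statement's English description precedes it below -/
import Mathlib

section
/- For every s ≥ 0, a > 0 and 0 < p < 1, the inequality a·s^p/(a+s) ≤ p^p·(1-p)^(1-p)·a^p holds. -/
/-- For every `s ≥ 0`, `a > 0` and `0 < p < 1`,
`a * s^p / (a + s) ≤ p^p * (1-p)^(1-p) * a^p`. -/
theorem a_sp_div_a_add_s_le (a s p : ℝ) (ha : 0 < a) (hs : 0 ≤ s)
    (hp0 : 0 < p) (hp1 : p < 1) :
    a * s ^ p / (a + s) ≤ p ^ p * (1 - p) ^ (1 - p) * a ^ p := by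
  have h1p : 0 < 1 - p := by linarith
  have has : 0 < a + s := by linarith
  rw [div_le_iff₀ has]
  have hgm := Real.geom_mean_le_arith_mean2_weighted h1p.le hp0.le
    (div_nonneg ha.le h1p.le) (div_nonneg hs hp0.le) (by ring)
  have hsum : (1 - p) * (a / (1 - p)) + p * (s / p) = a + s := by
    field_simp
  rw [hsum, Real.div_rpow ha.le h1p.le, Real.div_rpow hs hp0.le,
    div_mul_div_comm, div_le_iff₀ (by positivity)] at hgm
  have key : a ^ (1 - p) * s ^ p ≤ (a + s) * ((1 - p) ^ (1 - p) * p ^ p) := hgm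
  have hmul := mul_le_mul_of_nonneg_right key (le_of_lt (Real.rpow_pos_of_pos ha p))
  calc a * s ^ p = a ^ (1 - p) * s ^ p * a ^ p := by
        rw [mul_right_comm, ← Real.rpow_add ha, sub_add_cancel, Real.rpow_one]
    _ ≤ (a + s) * ((1 - p) ^ (1 - p) * p ^ p) * a ^ p := hmul
    _ = p ^ p * (1 - p) ^ (1 - p) * a ^ p * (a + s) := by ring
end

section
/- Let A be a bounded linear operator between Hilbert spaces and a > 0. Then the operator (A*A + aI)^{-1} A* has operator norm at most 1/(2√a). -/
open ContinuousLinearMap Real RealInnerProductSpace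

/-- For a bounded linear operator `A` between Hilbert spaces and `a > 0`, the operator
`(A*A + aI)⁻¹ A*` has norm at most `1/(2√a)`: whenever `(A*A + a•I) x = A* z`,
one has `‖x‖ ≤ (1/(2√a)) * ‖z‖`. -/
theorem norm_resolvent_adjoint_le (H K : Type*)
    [NormedAddCommGroup H] [InnerProductSpace ℝ H] [CompleteSpace H]
    [NormedAddCommGroup K] [InnerProductSpace ℝ K] [CompleteSpace K]
    (A : H →L[ℝ] K) (a : ℝ) (ha : 0 < a)
    (x : H) (z : K)
    (hx : ((ContinuousLinearMap.adjoint A) ∘L A + a • (1 : H →L[ℝ] H)) x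
        = (ContinuousLinearMap.adjoint A) z) :
    ‖x‖ ≤ (1 / (2 * Real.sqrt a)) * ‖z‖ := by
  have h1 : ⟪((ContinuousLinearMap.adjoint A) ∘L A + a • (1 : H →L[ℝ] H)) x, x⟫
      = ⟪(ContinuousLinearMap.adjoint A) z, x⟫ := by rw [hx]
  have h2 : ‖A x‖ ^ 2 + a * ‖x‖ ^ 2 = ⟪z, A x⟫ := by
    simpa [ContinuousLinearMap.add_apply, ContinuousLinearMap.smul_apply,
      inner_add_left, inner_smul_left, ContinuousLinearMap.adjoint_inner_left,
      real_inner_self_eq_norm_sq, real_inner_comm (A x) z] using h1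
  have h3 : ⟪z, A x⟫ ≤ ‖z‖ * ‖A x‖ := real_inner_le_norm z (A x)
  have h4 : a * ‖x‖ ^ 2 ≤ ‖z‖ ^ 2 / 4 := by nlinarith [sq_nonneg (‖A x‖ - ‖z‖ / 2)]
  have hs : Real.sqrt a > 0 := Real.sqrt_pos.mpr ha
  have hsa : Real.sqrt a ^ 2 = a := Real.sq_sqrt ha.le
  rw [div_mul_eq_mul_div, one_mul, le_div_iff₀ (by positivity)]
  have h5 : (‖x‖ * (2 * Real.sqrt a)) ^ 2 ≤ ‖z‖ ^ 2 := by nlinarith [norm_nonneg x]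
  calc ‖x‖ * (2 * Real.sqrt a) = Real.sqrt ((‖x‖ * (2 * Real.sqrt a)) ^ 2) :=
        (Real.sqrt_sq (by positivity)).symm
    _ ≤ Real.sqrt (‖z‖ ^ 2) := Real.sqrt_le_sqrt h5
    _ = ‖z‖ := Real.sqrt_sq (norm_nonneg z)
end

section
/- Let A be a bounded injective linear operator between Hilbert spaces, f in the range of A with Ay = f, and suppose y satisfies the source condition y = (A*A)^p w with ‖w‖ ≤ k for some p ∈ (0,1). Then for any a > 0 and any f_δ with ‖f_δ - f‖ ≤ δ, ‖(A*A + aI)^{-1}A* f_δ - y‖ ≤ δ/(2√a) + c_p·k·a^p, where c_p = p^p(1-p)^(1-p). -/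
open ContinuousLinearMap

lemma quarter_bound' (a s : ℝ) (ha : 0 < a) (hs : 0 ≤ s) :
    (s + a)⁻¹ * (s * (s + a)⁻¹) ≤ 1 / (4 * a) := by
  have hsa : 0 < s + a := by linarith
  rw [show (s + a)⁻¹ * (s * (s + a)⁻¹) = s / ((s+a)*(s+a)) by field_simp,
    div_le_div_iff₀ (by positivity) (by positivity)]
  nlinarith [sq_nonneg (s - a)]

lemma young_bound' (a s p : ℝ) (ha : 0 < a) (hs : 0 ≤ s) (hp0 : 0 < p) (hp1 : p < 1) :
    a * ((s + a)⁻¹ * s ^ p) ≤ p ^ p * (1 - p) ^ (1 - p) * a ^ p := by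
  have hsa : 0 < s + a := by linarith
  have h1p : 0 < 1 - p := by linarith
  have key : (s / p) ^ p * (a / (1 - p)) ^ (1 - p) ≤ s + a := by
    have := Real.geom_mean_le_arith_mean2_weighted hp0.le h1p.le
      (div_nonneg hs hp0.le) (div_nonneg ha.le h1p.le) (by ring)
    calc (s / p) ^ p * (a / (1 - p)) ^ (1 - p) ≤ p * (s / p) + (1 - p) * (a / (1 - p)) := this
    _ = s + a := by field_simp
  have hds : (s / p) ^ p = s ^ p / p ^ p := Real.div_rpow hs hp0.le p
  have hda : (a / (1 - p)) ^ (1 - p) = a ^ (1 - p) / (1 - p) ^ (1 - p) :=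
    Real.div_rpow ha.le h1p.le (1 - p)
  rw [hds, hda] at key
  have hpp : (0:ℝ) < p ^ p := Real.rpow_pos_of_pos hp0 p
  have hqq : (0:ℝ) < (1 - p) ^ (1 - p) := Real.rpow_pos_of_pos h1p (1 - p)
  have key2 : s ^ p * a ^ (1 - p) ≤ p ^ p * (1 - p) ^ (1 - p) * (s + a) := by
    rw [div_mul_div_comm, div_le_iff₀ (by positivity)] at key
    calc s ^ p * a ^ (1 - p) ≤ (s + a) * (p ^ p * (1 - p) ^ (1 - p)) := key
    _ = _ := by ring
  have hmul : s ^ p * a ^ (1 - p) * a ^ p = a * s ^ p := by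
    rw [mul_assoc, ← Real.rpow_add ha, sub_add_cancel, Real.rpow_one, mul_comm]
  rw [show a * ((s + a)⁻¹ * s ^ p) = a * s ^ p * (s + a)⁻¹ by ring, mul_inv_le_iff₀ hsa]
  calc a * s ^ p = s ^ p * a ^ (1 - p) * a ^ p := hmul.symm
  _ ≤ p ^ p * (1 - p) ^ (1 - p) * (s + a) * a ^ p :=
        mul_le_mul_of_nonneg_right key2 (Real.rpow_nonneg ha.le p)
  _ = p ^ p * (1 - p) ^ (1 - p) * a ^ p * (s + a) := by ring

set_option maxHeartbeats 1000000 in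
/-- Error estimate for Tikhonov-type regularization under the source condition
`y = (A*A)^p w`, `‖w‖ ≤ k`: if `Ay = f`, `‖fδ - f‖ ≤ δ` and
`(A*A + a•I) x = A* fδ`, then `‖x - y‖ ≤ δ/(2√a) + c_p k a^p`. -/
theorem regularization_error_bound (H K : Type*)
    [NormedAddCommGroup H] [InnerProductSpace ℂ H] [CompleteSpace H]
    [NormedAddCommGroup K] [InnerProductSpace ℂ K] [CompleteSpace K]
    (A : H →L[ℂ] K) (hA : Function.Injective A)
    (p k a δ : ℝ) (hp0 : 0 < p) (hp1 : p < 1) (hk : 0 < k) (ha : 0 < a) (hδ : 0 < δ)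
    (w y : H) (hw : ‖w‖ ≤ k)
    (hy : y = cfc (fun s : ℝ => s ^ p) ((ContinuousLinearMap.adjoint A) ∘L A) w)
    (f fδ : K) (hf : A y = f) (hfδ : ‖fδ - f‖ ≤ δ)
    (x : H)
    (hx : ((ContinuousLinearMap.adjoint A) ∘L A + a • (1 : H →L[ℂ] H)) x
        = (ContinuousLinearMap.adjoint A) fδ) :
    ‖x - y‖ ≤ δ / (2 * Real.sqrt a) + p ^ p * (1 - p) ^ (1 - p) * k * a ^ p := by
  set T : H →L[ℂ] H := (adjoint A) ∘L A with hTdef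
  have hTpos : T.IsPositive := by
    have := (isPositive_one (E := K) (𝕜 := ℂ)).adjoint_conj A
    convert this using 1; ext v; simp [hTdef]
  have hTsa : IsSelfAdjoint T := hTpos.isSelfAdjoint
  have hT0 : (0 : H →L[ℂ] H) ≤ T := (nonneg_iff_isPositive T).mpr hTpos
  have hspec : ∀ s ∈ spectrum ℝ T, 0 ≤ s := fun s hs => spectrum_nonneg_of_nonneg hT0 hs
  have hcont_inv : ContinuousOn (fun s : ℝ => (s + a)⁻¹) (spectrum ℝ T) := by
    apply ContinuousOn.inv₀ (by fun_prop)
    intro s hs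
    have := hspec s hs
    positivity
  have hcont_p : ContinuousOn (fun s : ℝ => s ^ p) (spectrum ℝ T) :=
    (Real.continuous_rpow_const hp0.le).continuousOn
  set Binv : H →L[ℂ] H := cfc (fun s : ℝ => (s + a)⁻¹) T with hBinvdef
  have hBinvsa : IsSelfAdjoint Binv := cfc_predicate _ T
  have hB : T + a • (1 : H →L[ℂ] H) = cfc (fun s : ℝ => s + a) T := by
    rw [cfc_add_const a (fun s : ℝ => s) T (by fun_prop) hTsa, cfc_id' ℝ T hTsa,
      Algebra.algebraMap_eq_smul_one]
  have hone : Binv * (T + a • (1 : H →L[ℂ] H)) = 1 := by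
    rw [hB, hBinvdef, ← cfc_mul _ _ T hcont_inv (by fun_prop)]
    have heq : (spectrum ℝ T).EqOn (fun s : ℝ => (s + a)⁻¹ * (s + a)) (fun _ => 1) := by
      intro s hs
      have h1 : 0 < s + a := by have := hspec s hs; linarith
      simp [inv_mul_cancel₀ h1.ne']
    rw [cfc_congr heq, cfc_const 1 T hTsa, map_one]
  have hTy : T y = adjoint A f := by rw [hTdef, comp_apply, hf]
  -- the key identity
  have hb : (T + a • (1 : H →L[ℂ] H)) (x - y) = adjoint A (fδ - f) - a • y := by
    rw [map_sub, hx, map_sub]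
    simp only [add_apply, smul_apply, one_apply, hTy]
    abel
  have hkey : x - y = Binv (adjoint A (fδ - f)) - a • Binv y := by
    calc x - y = (Binv * (T + a • (1 : H →L[ℂ] H))) (x - y) := by rw [hone]; simp
    _ = Binv ((T + a • (1 : H →L[ℂ] H)) (x - y)) := by rw [ContinuousLinearMap.mul_apply]
    _ = Binv (adjoint A (fδ - f)) - a • Binv y := by
        rw [hb, map_sub, map_smul_of_tower]
  -- Term 1 : the operator Binv ∘L A†
  set S : K →L[ℂ] H := Binv ∘L adjoint A with hSdef
  have hSadj : adjoint S = A ∘L Binv := by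
    rw [hSdef, adjoint_comp, adjoint_adjoint, hBinvsa.adjoint_eq]
  have hSS : S ∘L adjoint S = cfc (fun s : ℝ => (s + a)⁻¹ * (s * (s + a)⁻¹)) T := by
    have h1 : S ∘L adjoint S = Binv * (T * Binv) := by
      rw [hSadj, hSdef]
      ext v
      simp [hTdef, mul_apply, comp_apply]
    rw [h1, hBinvdef]
    nth_rewrite 2 [← cfc_id' ℝ T hTsa]
    rw [← cfc_mul _ _ T (by fun_prop) hcont_inv, ← cfc_mul (fun s : ℝ => (s + a)⁻¹) (fun x : ℝ => x * (x + a)⁻¹) T hcont_inv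
      ((continuousOn_id' _).mul hcont_inv)]
  have hSnorm : ‖S‖ ≤ 1 / (2 * Real.sqrt a) := by
    have h1 : ‖S ∘L adjoint S‖ = ‖S‖ * ‖S‖ := by
      have := norm_adjoint_comp_self (adjoint S)
      rwa [adjoint_adjoint, adjoint.norm_map] at this
    have h2 : ‖S‖ * ‖S‖ ≤ 1 / (4 * a) := by
      rw [← h1, hSS]
      exact norm_cfc_le (by positivity) (fun s hs => by
        have hs0 := hspec s hs
        have hsa : (0:ℝ) < s + a := by linarith
        rw [Real.norm_eq_abs, abs_of_nonneg (by positivity)]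
        exact quarter_bound' a s ha hs0)
    set t := Real.sqrt a with htdef
    have ht : 0 < t := Real.sqrt_pos.mpr ha
    have htt : t * t = a := Real.mul_self_sqrt ha.le
    have h3 : (2 * t * ‖S‖) ^ 2 ≤ 1 := by
      have : ‖S‖ * ‖S‖ * (4 * a) ≤ 1 := by
        rw [← le_div_iff₀ (by positivity)]; exact h2
      nlinarith
    have h4 : 2 * t * ‖S‖ ≤ 1 := by
      nlinarith [norm_nonneg S, ht]
    rw [le_div_iff₀ (by positivity)]
    linarith
  have hterm1 : ‖Binv (adjoint A (fδ - f))‖ ≤ δ / (2 * Real.sqrt a) := by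
    have h1 : Binv (adjoint A (fδ - f)) = S (fδ - f) := by rw [hSdef, comp_apply]
    rw [h1, div_eq_mul_one_div δ]
    calc ‖S (fδ - f)‖ ≤ ‖S‖ * ‖fδ - f‖ := le_opNorm _ _
    _ ≤ (1 / (2 * Real.sqrt a)) * δ :=
        mul_le_mul hSnorm hfδ (norm_nonneg _) (by positivity)
    _ = δ * (1 / (2 * Real.sqrt a)) := by ring
  -- Term 2
  have hyw : Binv y = cfc (fun s : ℝ => (s + a)⁻¹ * s ^ p) T w := by
    rw [hy, ← ContinuousLinearMap.mul_apply, hBinvdef, ← cfc_mul _ _ T hcont_inv hcont_p]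
  have h2 : a • Binv y = cfc (fun s : ℝ => a * ((s + a)⁻¹ * s ^ p)) T w := by
    rw [cfc_const_mul a (fun s : ℝ => (s + a)⁻¹ * s ^ p) T (hcont_inv.mul hcont_p), smul_apply, hyw]
  have hterm2 : ‖a • Binv y‖ ≤ p ^ p * (1 - p) ^ (1 - p) * k * a ^ p := by
    rw [h2]
    have hcnn : (0:ℝ) ≤ p ^ p * (1 - p) ^ (1 - p) * a ^ p := by
      have hpp : (0:ℝ) < p ^ p := Real.rpow_pos_of_pos hp0 p
      have hqq : (0:ℝ) < (1 - p) ^ (1 - p) := Real.rpow_pos_of_pos (by linarith) (1 - p)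
      have haa : (0:ℝ) < a ^ p := Real.rpow_pos_of_pos ha p
      positivity
    have hopn : ‖cfc (fun s : ℝ => a * ((s + a)⁻¹ * s ^ p)) T‖
        ≤ p ^ p * (1 - p) ^ (1 - p) * a ^ p := by
      refine norm_cfc_le hcnn (fun s hs => ?_)
      have hs0 := hspec s hs
      have hsa : (0:ℝ) < s + a := by linarith
      have hspnn : (0:ℝ) ≤ s ^ p := Real.rpow_nonneg hs0 p
      rw [Real.norm_eq_abs, abs_of_nonneg (by positivity)]
      exact young_bound' a s p ha hs0 hp0 hp1
    calc ‖cfc (fun s : ℝ => a * ((s + a)⁻¹ * s ^ p)) T w‖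
        ≤ ‖cfc (fun s : ℝ => a * ((s + a)⁻¹ * s ^ p)) T‖ * ‖w‖ := le_opNorm _ _
    _ ≤ (p ^ p * (1 - p) ^ (1 - p) * a ^ p) * k :=
        mul_le_mul hopn hw (norm_nonneg _) hcnn
    _ = p ^ p * (1 - p) ^ (1 - p) * k * a ^ p := by ring
  calc ‖x - y‖ = ‖Binv (adjoint A (fδ - f)) - a • Binv y‖ := by rw [hkey]
  _ ≤ ‖Binv (adjoint A (fδ - f))‖ + ‖a • Binv y‖ := norm_sub_le _ _
  _ ≤ δ / (2 * Real.sqrt a) + p ^ p * (1 - p) ^ (1 - p) * k * a ^ p :=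
      add_le_add hterm1 hterm2
end

section
/- Under the source condition y = (A*A)^p w with ‖w‖ ≤ k, p ∈ (0,1), one has ‖a(A*A + aI)^{-1} y‖ ≤ c_p·k·a^p for every a > 0, where c_p = p^p(1-p)^(1-p). -/
open ContinuousLinearMap

lemma aux_scalar_bound {p a : ℝ} (hp0 : 0 < p) (hp1 : p < 1) (ha : 0 < a)
    {s : ℝ} (hs : 0 ≤ s) :
    a * (s + a)⁻¹ * s ^ p ≤ p ^ p * (1 - p) ^ (1 - p) * a ^ p := by
  have hq : 0 < 1 - p := by linarith
  have hsa : 0 < s + a := by linarith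
  have e1 : p * (s / p) = s := by field_simp
  have e2 : (1 - p) * (a / (1 - p)) = a := by field_simp
  have h := Real.geom_mean_le_arith_mean2_weighted hp0.le hq.le
    (div_nonneg hs hp0.le) (div_nonneg ha.le hq.le) (by ring)
  rw [e1, e2] at h
  have key : s ^ p * a ^ (1 - p) ≤ p ^ p * (1 - p) ^ (1 - p) * (s + a) := by
    calc s ^ p * a ^ (1 - p)
        = (p * (s / p)) ^ p * ((1 - p) * (a / (1 - p))) ^ (1 - p) := by rw [e1, e2]
      _ = (p ^ p * (s / p) ^ p) * ((1 - p) ^ (1 - p) * (a / (1 - p)) ^ (1 - p)) := by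
          rw [Real.mul_rpow hp0.le (div_nonneg hs hp0.le),
            Real.mul_rpow hq.le (div_nonneg ha.le hq.le)]
      _ = p ^ p * (1 - p) ^ (1 - p) * ((s / p) ^ p * (a / (1 - p)) ^ (1 - p)) := by ring
      _ ≤ p ^ p * (1 - p) ^ (1 - p) * (s + a) :=
          mul_le_mul_of_nonneg_left h (by positivity)
  have hrw : a * (s + a)⁻¹ * s ^ p = a * s ^ p / (s + a) := by ring
  rw [hrw, div_le_iff₀ hsa]
  have haa : a ^ (1 - p) * a ^ p = a := by
    rw [← Real.rpow_add ha]
    norm_num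
  calc a * s ^ p = s ^ p * a ^ (1 - p) * a ^ p := by rw [mul_assoc, haa, mul_comm]
    _ ≤ p ^ p * (1 - p) ^ (1 - p) * (s + a) * a ^ p :=
        mul_le_mul_of_nonneg_right key (Real.rpow_nonneg ha.le p)
    _ = p ^ p * (1 - p) ^ (1 - p) * a ^ p * (s + a) := by ring

/-- Under the source condition `y = (A*A)^p w`, `‖w‖ ≤ k`, `p ∈ (0,1)`:
`‖a (A*A + aI)⁻¹ y‖ ≤ c_p k a^p`; i.e. if `(A*A + a•I) x = y` then
`‖a • x‖ ≤ p^p (1-p)^(1-p) k a^p`. -/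
theorem source_condition_bound (H K : Type*)
    [NormedAddCommGroup H] [InnerProductSpace ℂ H] [CompleteSpace H]
    [NormedAddCommGroup K] [InnerProductSpace ℂ K] [CompleteSpace K]
    (A : H →L[ℂ] K) (p k a : ℝ) (hp0 : 0 < p) (hp1 : p < 1) (hk : 0 < k) (ha : 0 < a)
    (w y : H) (hw : ‖w‖ ≤ k)
    (hy : y = cfc (fun s : ℝ => s ^ p) ((ContinuousLinearMap.adjoint A) ∘L A) w)
    (x : H)
    (hx : ((ContinuousLinearMap.adjoint A) ∘L A + a • (1 : H →L[ℂ] H)) x = y) :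
    ‖a • x‖ ≤ p ^ p * (1 - p) ^ (1 - p) * k * a ^ p := by
  set T := (ContinuousLinearMap.adjoint A) ∘L A with hTdef
  have hTpos : T.IsPositive := by
    have h1 : (1 : K →L[ℂ] K).IsPositive := isPositive_one
    simpa [hTdef, ContinuousLinearMap.one_def] using h1.adjoint_conj A
  have hTsa : IsSelfAdjoint T := hTpos.isSelfAdjoint
  have hspec : ∀ s ∈ spectrum ℝ T, 0 ≤ s := fun s hs =>
    spectrum_nonneg_of_nonneg ((ContinuousLinearMap.nonneg_iff_isPositive T).mpr hTpos) hs
  have hcont_inv : ContinuousOn (fun s : ℝ => a * (s + a)⁻¹) (spectrum ℝ T) := by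
    apply continuousOn_const.mul
    apply ContinuousOn.inv₀ (by fun_prop)
    intro s hs
    have := hspec s hs
    exact ne_of_gt (by linarith)
  have hcont_pow : ContinuousOn (fun s : ℝ => s ^ p) (spectrum ℝ T) := fun s _ =>
    (Real.continuousAt_rpow_const s p (Or.inr hp0.le)).continuousWithinAt
  have hmul : cfc (fun s : ℝ => a * (s + a)⁻¹) T * (T + a • 1) = a • (1 : H →L[ℂ] H) := by
    have h1 : T + a • (1 : H →L[ℂ] H) = cfc (fun s : ℝ => s + a) T := by
      rw [cfc_add_const a (fun s : ℝ => s) T (by fun_prop) hTsa, cfc_id' ℝ T hTsa,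
        Algebra.algebraMap_eq_smul_one]
    rw [h1, ← cfc_mul _ _ T hcont_inv (by fun_prop)]
    have h2 : cfc (fun s : ℝ => a * (s + a)⁻¹ * (s + a)) T = cfc (fun _ : ℝ => a) T := by
      apply cfc_congr
      intro s hs
      have h0 : s + a ≠ 0 := by have := hspec s hs; exact ne_of_gt (by linarith)
      field_simp
    rw [h2, cfc_const a T hTsa, Algebra.algebraMap_eq_smul_one]
  have hax : a • x = cfc (fun s : ℝ => a * (s + a)⁻¹) T y := by
    calc a • x = (a • (1 : H →L[ℂ] H)) x := by simp
      _ = (cfc (fun s : ℝ => a * (s + a)⁻¹) T * (T + a • 1)) x := by rw [hmul]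
      _ = cfc (fun s : ℝ => a * (s + a)⁻¹) T ((T + a • 1) x) := by
          rw [ContinuousLinearMap.mul_apply]
      _ = _ := by rw [hx]
  have hcomb : a • x = cfc (fun s : ℝ => a * (s + a)⁻¹ * s ^ p) T w := by
    rw [hax, hy, ← ContinuousLinearMap.mul_apply, ← cfc_mul _ _ T hcont_inv hcont_pow]
  rw [hcomb]
  have hC : (0:ℝ) ≤ p ^ p * (1 - p) ^ (1 - p) * a ^ p :=
    mul_nonneg (mul_nonneg (Real.rpow_nonneg hp0.le p)
      (Real.rpow_nonneg (by linarith) (1 - p))) (Real.rpow_nonneg ha.le p)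
  calc ‖cfc (fun s : ℝ => a * (s + a)⁻¹ * s ^ p) T w‖
      ≤ ‖cfc (fun s : ℝ => a * (s + a)⁻¹ * s ^ p) T‖ * ‖w‖ := le_opNorm _ _
    _ ≤ (p ^ p * (1 - p) ^ (1 - p) * a ^ p) * k := by
        refine mul_le_mul ?_ hw (norm_nonneg w) hC
        refine norm_cfc_le hC fun s hs => ?_
        have hs0 := hspec s hs
        have hsa : (0:ℝ) < s + a := by linarith
        rw [Real.norm_eq_abs, abs_of_nonneg (mul_nonneg (mul_nonneg ha.le
          (inv_nonneg.2 hsa.le)) (Real.rpow_nonneg hs0 p))]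
        exact aux_scalar_bound hp0 hp1 ha hs0
    _ = p ^ p * (1 - p) ^ (1 - p) * k * a ^ p := by ring
end

section
/- Let A be a bounded injective linear operator between Hilbert spaces with Ay = f, and y = (A*A)^p w, ‖w‖ ≤ k, p ∈ (0,1). With the choice a(δ) = b_p·δ^(2/(2p+1)) where b_p = (4pc_p k)^(-2/(2p+1)) and c_p = p^p(1-p)^(1-p), the regularized solution u_δ = (A*A + a(δ)I)^{-1}A* f_δ satisfies ‖u_δ - y‖ ≤ C_p·δ^(2p/(2p+1)) whenever ‖f_δ - f‖ ≤ δ, where C_p = 1/(2√b_p) + c_p·k·b_p^p. -/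
open ContinuousLinearMap

lemma scalar1 (a s : ℝ) (ha : 0 < a) (hs : 0 ≤ s) :
    (s + a)⁻¹ * s * (s + a)⁻¹ ≤ (4 * a)⁻¹ := by
  have hsa : 0 < s + a := by linarith
  have h2 : (s + a)⁻¹ * s * (s + a)⁻¹ = s / ((s + a) * (s + a)) := by
    rw [div_eq_mul_inv, mul_inv]; ring
  rw [h2, show (4 * a)⁻¹ = 1 / (4 * a) by ring,
    div_le_div_iff₀ (by positivity) (by positivity)]
  nlinarith [sq_nonneg (s - a)]

lemma scalar2 (p c a s : ℝ) (hp0 : 0 < p) (hp1 : p < 1)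
    (hc : c = p ^ p * (1 - p) ^ (1 - p)) (ha : 0 < a) (hs : 0 ≤ s) :
    a * s ^ p * (s + a)⁻¹ ≤ c * a ^ p := by
  have h1p : (0:ℝ) < 1 - p := by linarith
  have hc0 : 0 < c := by rw [hc]; positivity
  have hsa : 0 < s + a := by linarith
  have key : s ^ p * a ^ (1 - p) ≤ c * (s + a) := by
    have h := Real.geom_mean_le_arith_mean2_weighted hp0.le h1p.le
      (div_nonneg hs hp0.le) (div_nonneg ha.le h1p.le) (by ring)
    rw [Real.div_rpow hs hp0.le, Real.div_rpow ha.le h1p.le] at h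
    have h2 : p * (s / p) + (1 - p) * (a / (1 - p)) = s + a := by field_simp
    rw [h2] at h
    have hpp : 0 < p ^ p := Real.rpow_pos_of_pos hp0 p
    have hqq : 0 < (1 - p) ^ (1 - p) := Real.rpow_pos_of_pos h1p (1 - p)
    calc s ^ p * a ^ (1 - p) = (s ^ p / p ^ p * (a ^ (1 - p) / (1 - p) ^ (1 - p))) * c := by
          rw [hc]; field_simp
      _ ≤ (s + a) * c := by exact mul_le_mul_of_nonneg_right h hc0.le
      _ = c * (s + a) := by ring
  have haa : a = a ^ p * a ^ (1 - p) := by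
    rw [← Real.rpow_add ha]; norm_num
  calc a * s ^ p * (s + a)⁻¹ = a ^ p * ((s ^ p * a ^ (1 - p)) * (s + a)⁻¹) := by
        nth_rewrite 1 [haa]; ring
    _ ≤ a ^ p * (c * (s + a) * (s + a)⁻¹) := by
        apply mul_le_mul_of_nonneg_left _ (Real.rpow_nonneg ha.le p)
        exact mul_le_mul_of_nonneg_right key (by positivity)
    _ = c * a ^ p := by
        rw [mul_assoc c, mul_inv_cancel₀ hsa.ne', mul_one]; ring

lemma arith (p k δ c b : ℝ) (hp0 : 0 < p) (hp1 : p < 1) (hk : 0 < k) (hδ : 0 < δ)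
    (hc0 : 0 < c) (hb0 : 0 < b) :
    1 / (2 * Real.sqrt (b * δ ^ (2 / (2 * p + 1)))) * δ
      + c * (b * δ ^ (2 / (2 * p + 1))) ^ p * k
      = (1 / (2 * Real.sqrt b) + c * k * b ^ p) * δ ^ (2 * p / (2 * p + 1)) := by
  have h2p1 : (0:ℝ) < 2 * p + 1 := by linarith
  have hde : 0 < δ ^ (2 / (2 * p + 1)) := Real.rpow_pos_of_pos hδ _
  have hsb : 0 < Real.sqrt b := Real.sqrt_pos.mpr hb0
  have hd2 : 0 < δ ^ (2 / (2 * p + 1) / 2) := Real.rpow_pos_of_pos hδ _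
  have hdm : 0 < δ ^ (2 * p / (2 * p + 1)) := Real.rpow_pos_of_pos hδ _
  have hbp : 0 < b ^ p := Real.rpow_pos_of_pos hb0 _
  have hδm : δ ^ (2 * p / (2 * p + 1)) * δ ^ (2 / (2 * p + 1) / 2) = δ := by
    rw [← Real.rpow_add hδ, show 2 * p / (2 * p + 1) + 2 / (2 * p + 1) / 2 = 1 by
      field_simp, Real.rpow_one]
  rw [Real.sqrt_mul hb0.le, Real.sqrt_eq_rpow (δ ^ (2 / (2 * p + 1))),
      ← Real.rpow_mul hδ.le, show 2 / (2 * p + 1) * (1 / 2) = 2 / (2 * p + 1) / 2 by ring,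
      Real.mul_rpow hb0.le hde.le, ← Real.rpow_mul hδ.le,
      show 2 / (2 * p + 1) * p = 2 * p / (2 * p + 1) by ring]
  field_simp
  rw [show 2 / (2 * p + 1) / 2 = 2 / ((2 * p + 1) * 2) from by rw [div_div]] at hδm
  have hδm2 : δ ^ (1 / (2 * p + 1)) * δ ^ (2 * p / (2 * p + 1)) = δ := by
    rw [← Real.rpow_add hδ, ← add_div, show 1 + 2 * p = 2 * p + 1 by ring, div_self h2p1.ne', Real.rpow_one]
  linear_combination -hδm2

set_option maxHeartbeats 2000000 in
/-- Optimal-rate error estimate: with `a(δ) = b_p δ^(2/(2p+1))`,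
the regularized solution `u_δ = (A*A + a(δ)I)⁻¹ A* fδ` satisfies
`‖u_δ - y‖ ≤ C_p δ^(2p/(2p+1))` under the source condition `y = (A*A)^p w`, `‖w‖ ≤ k`. -/
theorem optimal_rate_regularization (H K : Type*)
    [NormedAddCommGroup H] [InnerProductSpace ℂ H] [CompleteSpace H]
    [NormedAddCommGroup K] [InnerProductSpace ℂ K] [CompleteSpace K]
    (A : H →L[ℂ] K) (hA : Function.Injective A)
    (p k δ : ℝ) (hp0 : 0 < p) (hp1 : p < 1) (hk : 0 < k) (hδ : 0 < δ)
    (w y : H) (hw : ‖w‖ ≤ k)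
    (hy : y = cfc (fun s : ℝ => s ^ p) ((ContinuousLinearMap.adjoint A) ∘L A) w)
    (f fδ : K) (hf : A y = f) (hfδ : ‖fδ - f‖ ≤ δ)
    (c b C : ℝ)
    (hc : c = p ^ p * (1 - p) ^ (1 - p))
    (hb : b = (4 * p * c * k) ^ (-(2 / (2 * p + 1))))
    (hC : C = 1 / (2 * Real.sqrt b) + c * k * b ^ p)
    (uδ : H)
    (hu : ((ContinuousLinearMap.adjoint A) ∘L A
        + (b * δ ^ (2 / (2 * p + 1))) • (1 : H →L[ℂ] H)) uδ
        = (ContinuousLinearMap.adjoint A) fδ) :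
    ‖uδ - y‖ ≤ C * δ ^ (2 * p / (2 * p + 1)) := by
  have h1p : (0:ℝ) < 1 - p := by linarith
  have hc0 : 0 < c := by rw [hc]; positivity
  have hb0 : 0 < b := by
    rw [hb]; exact Real.rpow_pos_of_pos (by positivity) _
  set T := (ContinuousLinearMap.adjoint A) ∘L A with hT
  set a : ℝ := b * δ ^ (2 / (2 * p + 1)) with haDef
  have ha : 0 < a := by
    have := Real.rpow_pos_of_pos hδ (2 / (2 * p + 1)); positivity
  have hTpos : T.IsPositive := by
    simpa [ContinuousLinearMap.one_def] using (ContinuousLinearMap.isPositive_one (E := K)).adjoint_conj A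
  have hTsa : IsSelfAdjoint T := hTpos.isSelfAdjoint
  have hT0 : (0 : H →L[ℂ] H) ≤ T := (ContinuousLinearMap.nonneg_iff_isPositive T).mpr hTpos
  have hspec : ∀ s ∈ spectrum ℝ T, 0 ≤ s := fun s hs => spectrum_nonneg_of_nonneg hT0 hs
  have hane : ∀ s ∈ spectrum ℝ T, s + a ≠ 0 := fun s hs =>
    ne_of_gt (by have := hspec s hs; linarith)
  have hgcont : ContinuousOn (fun s : ℝ => (s + a)⁻¹) (spectrum ℝ T) :=
    (continuousOn_id.add continuousOn_const).inv₀ hane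
  have hhp : ContinuousOn (fun s : ℝ => s ^ p) (spectrum ℝ T) := fun s _ =>
    (Real.continuousAt_rpow_const s p (Or.inr hp0.le)).continuousWithinAt
  set R : H →L[ℂ] H := cfc (fun s : ℝ => (s + a)⁻¹) T with hRdef
  have hRsa : IsSelfAdjoint R := cfc_predicate _ T
  have hTa : T + a • (1 : H →L[ℂ] H) = cfc (fun s : ℝ => s + a) T := by
    have h := cfc_add (a := T) (f := fun s : ℝ => s) (g := fun _ : ℝ => a)
      (by fun_prop) (by fun_prop)
    rw [cfc_id' ℝ T, cfc_const a T, Algebra.algebraMap_eq_smul_one] at h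
    exact h.symm
  have hRmulTa : R * (T + a • (1 : H →L[ℂ] H)) = 1 := by
    rw [hTa, hRdef, ← cfc_mul _ _ T hgcont (by fun_prop)]
    rw [cfc_congr (g := fun _ : ℝ => (1:ℝ)) fun s hs => by
      field_simp [hane s hs]]
    rw [cfc_const 1 T, map_one]
  have huδ : uδ = R ((ContinuousLinearMap.adjoint A) fδ) := by
    have h1 : R ((T + a • (1 : H →L[ℂ] H)) uδ) = R ((ContinuousLinearMap.adjoint A) fδ) := by
      rw [hu]
    rwa [← ContinuousLinearMap.mul_apply, hRmulTa, ContinuousLinearMap.one_apply] at h1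
  set Eop : H →L[ℂ] H := cfc (fun s : ℝ => a * s ^ p * (s + a)⁻¹) T with hEdef
  -- multiplication identities
  have hmul1 : R * T = cfc (fun s : ℝ => (s + a)⁻¹ * s) T := by
    have h := cfc_mul (fun s : ℝ => (s + a)⁻¹) (fun s : ℝ => s) T hgcont (by fun_prop)
    rw [cfc_id' ℝ T] at h
    exact h.symm
  have hmul2 : R * T * cfc (fun s : ℝ => s ^ p) T
      = cfc (fun s : ℝ => (s + a)⁻¹ * s * s ^ p) T := by
    have h := cfc_mul (fun s : ℝ => (s + a)⁻¹ * s) (fun s : ℝ => s ^ p) T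
      (hgcont.mul (by fun_prop)) hhp
    rw [← hmul1] at h
    exact h.symm
  have hkey : R * T * cfc (fun s : ℝ => s ^ p) T = cfc (fun s : ℝ => s ^ p) T - Eop := by
    rw [hmul2, hEdef, ← cfc_sub (fun s : ℝ => s ^ p) (fun s : ℝ => a * s ^ p * (s + a)⁻¹) T hhp ((continuousOn_const.mul hhp).mul hgcont)]
    exact cfc_congr fun s hs => by
      have h0 := hane s hs
      field_simp
      ring
  have hAf : (ContinuousLinearMap.adjoint A) f = T y := by
    rw [hT, ContinuousLinearMap.comp_apply, hf]
  have hdec : uδ - y = (R ∘L (ContinuousLinearMap.adjoint A)) (fδ - f) - Eop w := by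
    have e1 : R ((ContinuousLinearMap.adjoint A) fδ)
        = (R ∘L (ContinuousLinearMap.adjoint A)) (fδ - f) + R (T y) := by
      rw [ContinuousLinearMap.comp_apply, ← hAf, ← map_add, ← map_add, sub_add_cancel]
    have e2 : R (T y) = cfc (fun s : ℝ => s ^ p) T w - Eop w := by
      have e3 : R (T y) = (R * T * cfc (fun s : ℝ => s ^ p) T) w := by rw [hy]; rfl
      rw [e3, hkey, ContinuousLinearMap.sub_apply]
    rw [huδ, e1, e2, hy]
    abel
  -- norm bounds
  have hEnorm : ‖Eop‖ ≤ c * a ^ p := by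
    rw [hEdef]
    refine norm_cfc_le (by positivity) fun s hs => ?_
    have hs0 := hspec s hs
    rw [Real.norm_eq_abs, abs_of_nonneg (by positivity)]
    exact scalar2 p c a s hp0 hp1 hc ha hs0
  set X : K →L[ℂ] H := R ∘L (ContinuousLinearMap.adjoint A) with hXdef
  have hadjX : ContinuousLinearMap.adjoint X = A ∘L R := by
    rw [hXdef, ContinuousLinearMap.adjoint_comp, ContinuousLinearMap.adjoint_adjoint,
      ContinuousLinearMap.isSelfAdjoint_iff'.mp hRsa]
  have hXX : X ∘L ContinuousLinearMap.adjoint X = R * T * R := by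
    rw [hadjX]
    rfl
  have hnormX2 : ‖X‖ * ‖X‖ = ‖R * T * R‖ := by
    have h1 := ContinuousLinearMap.norm_adjoint_comp_self (ContinuousLinearMap.adjoint X)
    rw [ContinuousLinearMap.adjoint_adjoint, hXX] at h1
    have h2 : ‖ContinuousLinearMap.adjoint X‖ = ‖X‖ :=
      LinearIsometryEquiv.norm_map ContinuousLinearMap.adjoint X
    rw [h1, h2]
  have hRTR : R * T * R = cfc (fun s : ℝ => (s + a)⁻¹ * s * (s + a)⁻¹) T := by
    have h := cfc_mul (fun s : ℝ => (s + a)⁻¹ * s) (fun s : ℝ => (s + a)⁻¹) T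
      (hgcont.mul (by fun_prop)) hgcont
    rw [← hmul1] at h
    exact h.symm
  have hRTRnorm : ‖R * T * R‖ ≤ (4 * a)⁻¹ := by
    rw [hRTR]
    refine norm_cfc_le (by positivity) fun s hs => ?_
    have hs0 := hspec s hs
    have h0 : (0:ℝ) < s + a := by linarith
    rw [Real.norm_eq_abs, abs_of_nonneg (by positivity)]
    exact scalar1 a s ha hs0
  have hXnorm : ‖X‖ ≤ 1 / (2 * Real.sqrt a) := by
    have hsa : 0 < Real.sqrt a := Real.sqrt_pos.mpr ha
    have h3 : (1 / (2 * Real.sqrt a)) * (1 / (2 * Real.sqrt a)) = (4 * a)⁻¹ := by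
      rw [div_mul_div_comm, one_mul, show 2 * Real.sqrt a * (2 * Real.sqrt a)
        = 4 * (Real.sqrt a * Real.sqrt a) by ring, Real.mul_self_sqrt ha.le, one_div]
    refine nonneg_le_nonneg_of_sq_le_sq (by positivity) ?_
    rw [h3, hnormX2]
    exact hRTRnorm
  -- combine
  calc ‖uδ - y‖ = ‖X (fδ - f) - Eop w‖ := by rw [hdec]
    _ ≤ ‖X (fδ - f)‖ + ‖Eop w‖ := norm_sub_le _ _
    _ ≤ ‖X‖ * ‖fδ - f‖ + ‖Eop‖ * ‖w‖ := add_le_add (X.le_opNorm _) (Eop.le_opNorm _)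
    _ ≤ 1 / (2 * Real.sqrt a) * δ + (c * a ^ p) * k := by
        have h1 := mul_le_mul hXnorm hfδ (norm_nonneg _) (by positivity)
        have h2 := mul_le_mul hEnorm hw (norm_nonneg _) (by positivity)
        linarith
    _ = C * δ ^ (2 * p / (2 * p + 1)) := by
        rw [hC, haDef]
        exact arith p k δ c b hp0 hp1 hk hδ hc0 hb0
end

section
/- For a bounded linear operator A between Hilbert spaces and a > 0, every z in the codomain satisfies ‖(A*A + aI)^{-1}A* z‖² ≤ (1/(4a))·‖z‖². Equivalently, the function s ↦ s/(s+a)² on [0,∞) is bounded by 1/(4a). -/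
open ContinuousLinearMap

/-- For a bounded operator `A` between Hilbert spaces and `a > 0`,
`‖(A*A + aI)⁻¹ A* z‖² ≤ ‖z‖²/(4a)` for every `z`; the key scalar estimate
`s/(s+a)² ≤ 1/(4a)` for `s ≥ 0` is included. -/
theorem resolvent_adjoint_sq_bound (H K : Type*)
    [NormedAddCommGroup H] [InnerProductSpace ℝ H] [CompleteSpace H]
    [NormedAddCommGroup K] [InnerProductSpace ℝ K] [CompleteSpace K]
    (A : H →L[ℝ] K) (a : ℝ) (ha : 0 < a) :
    (∀ (z : K) (x : H),
      ((ContinuousLinearMap.adjoint A) ∘L A + a • (1 : H →L[ℝ] H)) x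
          = (ContinuousLinearMap.adjoint A) z →
        ‖x‖ ^ 2 ≤ (1 / (4 * a)) * ‖z‖ ^ 2) ∧
    (∀ s : ℝ, 0 ≤ s → s / (s + a) ^ 2 ≤ 1 / (4 * a)) := by
  constructor
  · intro z x h
    have h1 : (ContinuousLinearMap.adjoint A) (A x) + a • x
        = (ContinuousLinearMap.adjoint A) z := by
      simpa using h
    have h2 : inner ℝ ((ContinuousLinearMap.adjoint A) (A x) + a • x) x
        = (inner ℝ ((ContinuousLinearMap.adjoint A) z) x : ℝ) := by rw [h1]
    have h3 : ‖A x‖ ^ 2 + a * ‖x‖ ^ 2 = (inner ℝ z (A x) : ℝ) := by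
      rw [inner_add_left, real_inner_smul_left,
        ContinuousLinearMap.adjoint_inner_left,
        ContinuousLinearMap.adjoint_inner_left, real_inner_self_eq_norm_sq,
        real_inner_self_eq_norm_sq] at h2
      linarith
    have h4 : (inner ℝ z (A x) : ℝ) ≤ ‖z‖ * ‖A x‖ := real_inner_le_norm z (A x)
    have h5 : 4 * a * ‖x‖ ^ 2 ≤ ‖z‖ ^ 2 := by
      nlinarith [sq_nonneg (‖z‖ - 2 * ‖A x‖)]
    rw [div_mul_eq_mul_div, le_div_iff₀ (by positivity)]
    linarith
  · intro s hs
    rw [div_le_div_iff₀ (by positivity) (by positivity)]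
    nlinarith [sq_nonneg (s - a)]
end
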